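/- Let W(x) = N(x,σ²), ρ ∈ (0,1), θ_ρ as in the Gaussian Augustin center formula, and V(x) the order-ρ tilted measure of W(x) toward N(0,θ_ρ). Let Λ_x = ln(dW(x)/dN(0,θ_ρ)) − E_{V(x)}[ln(dW(x)/dN(0,θ_ρ))]. Then E_{V(x)}[|Λ_x|³] ≤ 18(θ_ρ − σ²)³/(ρθ_ρ + (1−ρ)σ²)³ + 18√(2/π) σ³ θ_ρ^{3/2} x³/(ρθ_ρ + (1−ρ)σ²)^{4.5}. -/

import Mathlib

open MeasureTheory ProbabilityTheory Real

open scoped ENNReal NNReal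

lemma integrable_pow_gauss {b : ℝ} (hb : 0 < b) (n : ℕ) :
    Integrable (fun x : ℝ => x ^ n * Real.exp (-b * x ^ 2)) := by
  have hInt : Integrable (fun x : ℝ => ((Nat.factorial n) : ℝ) * Real.exp (1/(4*b)) *
      (Real.exp (-b * (x - 1/(2*b)) ^ 2) + Real.exp (-b * (x + 1/(2*b)) ^ 2))) := by
    refine Integrable.const_mul ?_ _
    exact ((integrable_exp_neg_mul_sq hb).comp_sub_right (1/(2*b))).add
      ((integrable_exp_neg_mul_sq hb).comp_add_right (1/(2*b)))
  refine hInt.mono' ?_ ?_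
  · exact ((continuous_pow n).mul (by continuity)).aestronglyMeasurable
  · refine Filter.Eventually.of_forall fun x => ?_
    have h1 : |x| ^ n ≤ ((Nat.factorial n) : ℝ) * Real.exp |x| := by
      have := Real.pow_div_factorial_le_exp _ (abs_nonneg x) n
      have hfac : (0:ℝ) < (Nat.factorial n) := by positivity
      calc |x| ^ n = |x| ^ n / (Nat.factorial n) * (Nat.factorial n) := by field_simp
        _ ≤ Real.exp |x| * (Nat.factorial n) := by
            exact mul_le_mul_of_nonneg_right this hfac.le
        _ = ((Nat.factorial n) : ℝ) * Real.exp |x| := by ring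
    have h2 : Real.exp |x| ≤ Real.exp x + Real.exp (-x) := by
      rcases abs_cases x with ⟨h, _⟩ | ⟨h, _⟩ <;> rw [h] <;>
        [exact le_add_of_nonneg_right (Real.exp_pos _).le;
         exact le_add_of_nonneg_left (Real.exp_pos _).le]
    have key : ∀ c : ℝ, (c = 1 ∨ c = -1) →
        Real.exp (c * x) * Real.exp (-b * x ^ 2) =
          Real.exp (1/(4*b)) * Real.exp (-b * (x - c/(2*b)) ^ 2) := by
      intro c hc
      rw [← Real.exp_add, ← Real.exp_add]
      congr 1
      rcases hc with rfl | rfl <;> field_simp <;> ring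
    have hb' : b ≠ 0 := hb.ne'
    calc ‖x ^ n * Real.exp (-b * x ^ 2)‖ = |x| ^ n * Real.exp (-b * x ^ 2) := by
          rw [norm_mul, norm_pow, Real.norm_eq_abs, Real.norm_eq_abs,
            abs_of_pos (Real.exp_pos _)]
      _ ≤ ((Nat.factorial n) : ℝ) * Real.exp |x| * Real.exp (-b * x ^ 2) := by
          exact mul_le_mul_of_nonneg_right h1 (Real.exp_pos _).le
      _ ≤ ((Nat.factorial n) : ℝ) * (Real.exp x + Real.exp (-x)) * Real.exp (-b * x ^ 2) := by
          have : (0:ℝ) ≤ ((Nat.factorial n) : ℝ) := by positivity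
          exact mul_le_mul_of_nonneg_right (mul_le_mul_of_nonneg_left h2 this)
            (Real.exp_pos _).le
      _ = ((Nat.factorial n) : ℝ) * Real.exp (1/(4*b)) *
          (Real.exp (-b * (x - 1/(2*b)) ^ 2) + Real.exp (-b * (x + 1/(2*b)) ^ 2)) := by
          have e1 := key 1 (Or.inl rfl)
          have e2 := key (-1) (Or.inr rfl)
          simp only [one_mul, neg_one_mul] at e1 e2
          rw [show x - -1/(2*b) = x + 1/(2*b) by ring] at e2
          linear_combination ((Nat.factorial n):ℝ) * e1 + ((Nat.factorial n):ℝ) * e2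

lemma gauss_rec {b : ℝ} (hb : 0 < b) (n : ℕ) :
    ∫ x : ℝ, x ^ (n+2) * Real.exp (-b * x ^ 2) =
      ((n:ℝ)+1) / (2*b) * ∫ x : ℝ, x ^ n * Real.exp (-b * x ^ 2) := by
  have hderiv : ∀ y : ℝ, HasDerivAt (fun x : ℝ => x ^ (n+1) * Real.exp (-b * x ^ 2))
      (((n:ℝ)+1) * (y ^ n * Real.exp (-b * y ^ 2))
        - 2*b * (y ^ (n+2) * Real.exp (-b * y ^ 2))) y := by
    intro y
    have h1 : HasDerivAt (fun x : ℝ => x ^ (n+1)) (((n:ℝ)+1) * y ^ n) y := by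
      simpa using hasDerivAt_pow (n+1) y
    have h2 : HasDerivAt (fun x : ℝ => Real.exp (-b * x ^ 2))
        (Real.exp (-b * y ^ 2) * (-b * (2 * y))) y := by
      have : HasDerivAt (fun x : ℝ => -b * x ^ 2) (-b * (2*y)) y := by
        simpa using (hasDerivAt_pow 2 y).const_mul (-b)
      exact this.exp
    have := h1.mul h2
    exact this.congr_deriv (by ring)
  have hf' : Integrable (fun y : ℝ => ((n:ℝ)+1) * (y ^ n * Real.exp (-b * y ^ 2))
      - 2*b * (y ^ (n+2) * Real.exp (-b * y ^ 2))) :=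
    ((integrable_pow_gauss hb n).const_mul _).sub ((integrable_pow_gauss hb (n+2)).const_mul _)
  have h0 := integral_eq_zero_of_hasDerivAt_of_integrable hderiv hf' (integrable_pow_gauss hb (n+1))
  rw [integral_sub ((integrable_pow_gauss hb n).const_mul _)
    ((integrable_pow_gauss hb (n+2)).const_mul _), integral_const_mul, integral_const_mul] at h0
  have hb' : (2:ℝ)*b ≠ 0 := by positivity
  rw [div_mul_eq_mul_div, eq_div_iff hb']
  linarith [h0]

lemma gauss_m1 {b : ℝ} (hb : 0 < b) :
    ∫ x : ℝ, x ^ 1 * Real.exp (-b * x ^ 2) = 0 := by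
  have hderiv : ∀ y : ℝ, HasDerivAt (fun x : ℝ => -(2*b)⁻¹ * Real.exp (-b * x ^ 2))
      (y ^ 1 * Real.exp (-b * y ^ 2)) y := by
    intro y
    have h2 : HasDerivAt (fun x : ℝ => Real.exp (-b * x ^ 2))
        (Real.exp (-b * y ^ 2) * (-b * (2 * y))) y := by
      have : HasDerivAt (fun x : ℝ => -b * x ^ 2) (-b * (2*y)) y := by
        simpa using (hasDerivAt_pow 2 y).const_mul (-b)
      exact this.exp
    have := h2.const_mul (-(2*b)⁻¹)
    exact this.congr_deriv (by field_simp)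
  exact integral_eq_zero_of_hasDerivAt_of_integrable hderiv (integrable_pow_gauss hb 1)
    (((integrable_exp_neg_mul_sq hb)).const_mul _)

lemma gauss_m0 {b : ℝ} (hb : 0 < b) :
    ∫ x : ℝ, x ^ 0 * Real.exp (-b * x ^ 2) = Real.sqrt (π / b) := by
  simpa using integral_gaussian b

lemma integral_gaussianReal_rep {m v : ℝ} (hv : 0 < v) (g : ℝ → ℝ) :
    ∫ y, g y ∂(gaussianReal m v.toNNReal) =
      ∫ t : ℝ, (Real.sqrt (2 * π * v))⁻¹ * Real.exp (-(2*v)⁻¹ * t ^ 2) * g (m + t) := by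
  have hv' : v.toNNReal ≠ 0 := by simp [Real.toNNReal_eq_zero]; linarith
  rw [gaussianReal_of_var_ne_zero _ hv']
  have hpdf : (gaussianPDF m v.toNNReal) =
      fun y => ((Real.toNNReal (gaussianPDFReal m v.toNNReal y) : ℝ≥0) : ℝ≥0∞) := rfl
  rw [hpdf, integral_withDensity_eq_integral_smul
    (f := fun y => (gaussianPDFReal m v.toNNReal y).toNNReal)
    ((measurable_gaussianPDFReal _ _).real_toNNReal) g]
  have hcoe : ∀ y, (Real.toNNReal (gaussianPDFReal m v.toNNReal y) : ℝ≥0) • g y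
      = gaussianPDFReal m v.toNNReal y * g y := by
    intro y
    rw [NNReal.smul_def, Real.coe_toNNReal _ (gaussianPDFReal_nonneg _ _ _)]
    rfl
  simp_rw [hcoe]
  rw [show (∫ t : ℝ, (Real.sqrt (2 * π * v))⁻¹ * Real.exp (-(2*v)⁻¹ * t ^ 2) * g (m + t))
      = ∫ t : ℝ, (fun y => gaussianPDFReal m v.toNNReal y * g y) (m + t) from ?_]
  · exact (integral_add_left_eq_self (fun y => gaussianPDFReal m v.toNNReal y * g y) m).symm
  · congr 1
    funext t
    rw [gaussianPDFReal_def]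
    have h1 : ((v.toNNReal : ℝ)) = v := Real.coe_toNNReal _ hv.le
    simp only [h1]
    rw [show m + t - m = t by ring, show -t^2/(2*v) = -(2*v)⁻¹ * t^2 by field_simp]

lemma gauss_norm {v : ℝ} (hv : 0 < v) :
    (Real.sqrt (2*π*v))⁻¹ * Real.sqrt (π / (2*v)⁻¹) = 1 := by
  rw [show π / (2*v)⁻¹ = 2*π*v by field_simp]
  have : (0:ℝ) < π := Real.pi_pos
  exact inv_mul_cancel₀ (by positivity)

lemma sext_int {v : ℝ} (hv : 0 < v) (A B C E : ℝ) :
    ∫ t : ℝ, (Real.sqrt (2*π*v))⁻¹ * Real.exp (-(2*v)⁻¹ * t ^ 2) *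
        (A*t^6 + B*t^4 + C*t^2 + E) = 15*A*v^3 + 3*B*v^2 + C*v + E := by
  have hb : 0 < (2*v)⁻¹ := by positivity
  have e : (fun t : ℝ => (Real.sqrt (2*π*v))⁻¹ * Real.exp (-(2*v)⁻¹*t^2) * (A*t^6+B*t^4+C*t^2+E))
      = fun t => (Real.sqrt (2*π*v))⁻¹ * (A*(t^6*Real.exp (-(2*v)⁻¹*t^2)) +
        (B*(t^4*Real.exp (-(2*v)⁻¹*t^2)) + (C*(t^2*Real.exp (-(2*v)⁻¹*t^2)) +
          E*(t^0*Real.exp (-(2*v)⁻¹*t^2))))) := by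
    funext t; ring
  have i6 : Integrable (fun t:ℝ => A*(t^6*Real.exp (-(2*v)⁻¹*t^2))) :=
    (integrable_pow_gauss hb 6).const_mul _
  have i4 : Integrable (fun t:ℝ => B*(t^4*Real.exp (-(2*v)⁻¹*t^2))) :=
    (integrable_pow_gauss hb 4).const_mul _
  have i2 : Integrable (fun t:ℝ => C*(t^2*Real.exp (-(2*v)⁻¹*t^2))) :=
    (integrable_pow_gauss hb 2).const_mul _
  have i0 : Integrable (fun t:ℝ => E*(t^0*Real.exp (-(2*v)⁻¹*t^2))) :=
    (integrable_pow_gauss hb 0).const_mul _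
  have i20 : Integrable (fun t:ℝ => C*(t^2*Real.exp (-(2*v)⁻¹*t^2)) + E*(t^0*Real.exp (-(2*v)⁻¹*t^2))) := i2.add i0
  have i420 : Integrable (fun t:ℝ => B*(t^4*Real.exp (-(2*v)⁻¹*t^2)) + (C*(t^2*Real.exp (-(2*v)⁻¹*t^2)) + E*(t^0*Real.exp (-(2*v)⁻¹*t^2)))) := i4.add i20
  rw [e, integral_const_mul, integral_add i6 i420, integral_add i4 i20, integral_add i2 i0,
    integral_const_mul, integral_const_mul, integral_const_mul, integral_const_mul,
    show (6:ℕ) = 4 + 2 from rfl, gauss_rec hb 4, show (4:ℕ) = 2 + 2 from rfl, gauss_rec hb 2,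
    (gauss_rec hb 0 : ∫ x : ℝ, x ^ 2 * Real.exp (-(2*v)⁻¹ * x ^ 2) = (((0:ℕ):ℝ)+1)/(2*(2*v)⁻¹) * ∫ x : ℝ, x ^ 0 * Real.exp (-(2*v)⁻¹ * x ^ 2)), gauss_m0 hb]
  have hnorm := gauss_norm hv
  have h1 : ((0:ℕ):ℝ) + 1 = 1 := by norm_num
  have h2 : ((2:ℕ):ℝ) + 1 = 3 := by norm_num
  have h4 : ((4:ℕ):ℝ) + 1 = 5 := by norm_num
  rw [h1, h2, h4, show (1:ℝ)/(2*(2*v)⁻¹) = v by field_simp,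
    show (3:ℝ)/(2*(2*v)⁻¹) = 3*v by field_simp,
    show (5:ℝ)/(2*(2*v)⁻¹) = 5*v by field_simp]
  linear_combination (15*A*v^3+3*B*v^2+C*v+E) * hnorm

lemma quad_int {v : ℝ} (hv : 0 < v) (A B C : ℝ) :
    ∫ t : ℝ, (Real.sqrt (2*π*v))⁻¹ * Real.exp (-(2*v)⁻¹ * t ^ 2) *
        (A*t^2 + B*t + C) = A*v + C := by
  have hb : 0 < (2*v)⁻¹ := by positivity
  have e : (fun t : ℝ => (Real.sqrt (2*π*v))⁻¹ * Real.exp (-(2*v)⁻¹*t^2) * (A*t^2+B*t+C))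
      = fun t => (Real.sqrt (2*π*v))⁻¹ * (A*(t^2*Real.exp (-(2*v)⁻¹*t^2)) +
        (B*(t^1*Real.exp (-(2*v)⁻¹*t^2)) + C*(t^0*Real.exp (-(2*v)⁻¹*t^2)))) := by
    funext t; ring
  have i2 : Integrable (fun t:ℝ => A*(t^2*Real.exp (-(2*v)⁻¹*t^2))) :=
    (integrable_pow_gauss hb 2).const_mul _
  have i1 : Integrable (fun t:ℝ => B*(t^1*Real.exp (-(2*v)⁻¹*t^2))) :=
    (integrable_pow_gauss hb 1).const_mul _
  have i0 : Integrable (fun t:ℝ => C*(t^0*Real.exp (-(2*v)⁻¹*t^2))) :=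
    (integrable_pow_gauss hb 0).const_mul _
  have i10 : Integrable (fun t:ℝ => B*(t^1*Real.exp (-(2*v)⁻¹*t^2)) + C*(t^0*Real.exp (-(2*v)⁻¹*t^2))) := i1.add i0
  rw [e, integral_const_mul, integral_add i2 i10, integral_add i1 i0,
    integral_const_mul, integral_const_mul, integral_const_mul,
    (gauss_rec hb 0 : ∫ x : ℝ, x ^ 2 * Real.exp (-(2*v)⁻¹ * x ^ 2) = (((0:ℕ):ℝ)+1)/(2*(2*v)⁻¹) * ∫ x : ℝ, x ^ 0 * Real.exp (-(2*v)⁻¹ * x ^ 2)), gauss_m1 hb, gauss_m0 hb]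
  have hnorm := gauss_norm hv
  rw [show ((0:ℕ):ℝ) + 1 = 1 by norm_num, show (1:ℝ)/(2*(2*v)⁻¹) = v by field_simp]
  linear_combination (A*v+C) * hnorm

lemma integral_quad_gaussianReal {m v : ℝ} (hv : 0 < v) (A B C : ℝ) :
    ∫ y, (A*y^2 + B*y + C) ∂(gaussianReal m v.toNNReal) = A*(v+m^2) + B*m + C := by
  rw [integral_gaussianReal_rep hv]
  rw [show (fun t : ℝ => (Real.sqrt (2*π*v))⁻¹ * Real.exp (-(2*v)⁻¹ * t ^ 2) *
      (A*(m+t)^2 + B*(m+t) + C))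
    = fun t : ℝ => (Real.sqrt (2*π*v))⁻¹ * Real.exp (-(2*v)⁻¹ * t ^ 2) *
      (A*t^2 + (2*A*m+B)*t + (A*m^2+B*m+C)) from funext fun t => by ring]
  rw [quad_int hv]
  ring

lemma integral_sext_gaussianReal {m v : ℝ} (hv : 0 < v) (A B C E : ℝ) :
    ∫ y, (A*(y-m)^6 + B*(y-m)^4 + C*(y-m)^2 + E) ∂(gaussianReal m v.toNNReal)
      = 15*A*v^3 + 3*B*v^2 + C*v + E := by
  rw [integral_gaussianReal_rep hv]
  rw [show (fun t : ℝ => (Real.sqrt (2*π*v))⁻¹ * Real.exp (-(2*v)⁻¹ * t ^ 2) *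
      (A*(m+t-m)^6 + B*(m+t-m)^4 + C*(m+t-m)^2 + E))
    = fun t : ℝ => (Real.sqrt (2*π*v))⁻¹ * Real.exp (-(2*v)⁻¹ * t ^ 2) *
      (A*t^6 + B*t^4 + C*t^2 + E) from funext fun t => by ring_nf]
  exact sext_int hv A B C E

lemma cube_abs_add (p q : ℝ) : |p+q|^3 ≤ 4*|p|^3 + 4*|q|^3 := by
  have h3 : |p+q|^3 ≤ (|p|+|q|)^3 := pow_le_pow_left₀ (abs_nonneg _) (abs_add_le p q) 3
  nlinarith [abs_nonneg p, abs_nonneg q, sq_nonneg (|p|-|q|), h3,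
    mul_nonneg (abs_nonneg p) (abs_nonneg q)]

lemma abs_cube_le (u : ℝ) {v : ℝ} (hv : 0 < v) :
    |u|^3 ≤ (u^4 + v*u^2)/(2*Real.sqrt v) := by
  have hs : 0 < Real.sqrt v := Real.sqrt_pos.mpr hv
  rw [le_div_iff₀ (by positivity)]
  have habs3 : |u|^3 = u^2*|u| := by
    rw [show (3:ℕ) = 2+1 from rfl, pow_add, sq_abs, pow_one]
  rw [habs3]
  nlinarith [sq_nonneg (u^2 - Real.sqrt v * |u|), Real.sq_sqrt hv.le, sq_abs u, abs_nonneg u]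
lemma abs_sq_sub_le (u w : ℝ) (hw : 0 ≤ w) : |u^2 - w| ≤ u^2 + w := by
  rw [abs_le]
  constructor <;> nlinarith [sq_nonneg u]

lemma term2_aux (σ sθ sD x : ℝ) (hσ : σ ≠ 0) (h1 : sθ ≠ 0) (h2 : sD ≠ 0) :
    8*((x/sD^2)^3/(σ*sθ/sD))*(σ^2*sθ^2/sD^2)^2 = 8*σ^3*sθ^3*x^3/((sD^2)^4*sD) := by
  field_simp

set_option maxHeartbeats 2000000 in
theorem main_aux (σ ρ x θ : ℝ) (hσ : 0 < σ) (hx : 0 < x)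
    (hρ0 : 0 < ρ) (hρ1 : ρ < 1) (hθσ : σ^2 ≤ θ) :
    ∫ y, |Real.log (((gaussianReal x (σ ^ 2).toNNReal).rnDeriv (gaussianReal 0 θ.toNNReal) y).toReal) -
      ∫ z, Real.log (((gaussianReal x (σ ^ 2).toNNReal).rnDeriv (gaussianReal 0 θ.toNNReal) z).toReal)
        ∂(gaussianReal (ρ * θ * x / (ρ * θ + (1 - ρ) * σ ^ 2))
          (σ ^ 2 * θ / (ρ * θ + (1 - ρ) * σ ^ 2)).toNNReal)| ^ 3
      ∂(gaussianReal (ρ * θ * x / (ρ * θ + (1 - ρ) * σ ^ 2))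
        (σ ^ 2 * θ / (ρ * θ + (1 - ρ) * σ ^ 2)).toNNReal) ≤
      18 * (θ - σ ^ 2) ^ 3 / (ρ * θ + (1 - ρ) * σ ^ 2) ^ 3 +
        18 * Real.sqrt (2 / π) * σ ^ 3 * θ ^ ((3 : ℝ) / 2) * x ^ 3 /
          (ρ * θ + (1 - ρ) * σ ^ 2) ^ ((4.5 : ℝ)) := by
  have hπ := Real.pi_pos
  have hσ2 : (0:ℝ) < σ^2 := by positivity
  have hθ : 0 < θ := lt_of_lt_of_le hσ2 hθσ
  set D := ρ * θ + (1 - ρ) * σ ^ 2 with hD_def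
  set m := ρ * θ * x / D with hm_def
  set v := σ ^ 2 * θ / D with hv_def
  set W := gaussianReal x (σ ^ 2).toNNReal with hW_def
  set Q := gaussianReal 0 θ.toNNReal with hQ_def
  set V := gaussianReal m v.toNNReal with hV_def
  set a := 1/(2*θ) - 1/(2*σ^2) with ha_def
  set tc := x/σ^2 with htc_def
  set r := x/D with hr_def
  set c' := Real.log ((Real.sqrt (2*π*σ^2))⁻¹) - Real.log ((Real.sqrt (2*π*θ))⁻¹)
    - x^2/(2*σ^2) with hc'_def
  set s := Real.sqrt v with hs_def
  set A := 4*|a|^3 with hA_def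
  set B := 12*|a|^3*v + 2*r^3/s with hB_def
  set C := 12*|a|^3*v^2 + 2*r^3/s*v with hC_def
  set E := 4*|a|^3*v^3 with hE_def
  set sθ := Real.sqrt θ with hsθ_def
  set sD := Real.sqrt D with hsD_def
  clear_value D m v W Q V a tc r c' s A B C E sθ sD
  have hD : 0 < D := by
    rw [hD_def]
    have h1 : 0 < ρ * θ := mul_pos hρ0 hθ
    have h2 : 0 < (1 - ρ) * σ ^ 2 := mul_pos (by linarith) hσ2
    linarith
  have hm2 : m = ρ * θ * x / D := hm_def
  have hv : 0 < v := by rw [hv_def]; positivity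
  have hvσ : (σ^2).toNNReal ≠ 0 := by simp only [ne_eq, Real.toNNReal_eq_zero, not_le]; linarith
  have hvθ : θ.toNNReal ≠ 0 := by simp only [ne_eq, Real.toNNReal_eq_zero, not_le]; linarith
  have hvv : v.toNNReal ≠ 0 := by simp only [ne_eq, Real.toNNReal_eq_zero, not_le]; linarith
  have hcσ : ((σ^2).toNNReal : ℝ) = σ^2 := Real.coe_toNNReal _ hσ2.le
  have hcθ : ((θ).toNNReal : ℝ) = θ := Real.coe_toNNReal _ hθ.le
  have hr0 : 0 < r := by rw [hr_def]; positivity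
  have hDne : ρ * θ + (1 - ρ) * σ ^ 2 ≠ 0 := by rw [← hD_def]; exact hD.ne'
  have hrid : 2*a*m + tc = r := by
    rw [ha_def, hm_def, htc_def, hr_def, hD_def]
    field_simp
    have h' : σ ^ 2 - σ ^ 2 * ρ + θ * ρ ≠ 0 := by intro h; apply hDne; linarith
    linear_combination -(mul_inv_cancel₀ h')
  have hs : 0 < s := by rw [hs_def]; exact Real.sqrt_pos.mpr hv
  -- pure arithmetic facts
  have habs_a : |a| = (θ - σ^2)/(2*θ*σ^2) := by
    rw [ha_def, abs_of_nonpos]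
    · field_simp
      ring
    · rw [sub_nonpos, div_le_div_iff₀ (by positivity) (by positivity)]
      nlinarith
  have hterm1 : 112*|a|^3*v^3 = 14*(θ-σ^2)^3/D^3 := by
    rw [habs_a, hv_def, hD_def]
    field_simp
    ring
  have hsθ : 0 < sθ := by rw [hsθ_def]; exact Real.sqrt_pos.mpr hθ
  have hsD : 0 < sD := by rw [hsD_def]; exact Real.sqrt_pos.mpr hD
  have hsθ2 : sθ^2 = θ := by rw [hsθ_def]; exact Real.sq_sqrt hθ.le
  have hsD2 : sD^2 = D := by rw [hsD_def]; exact Real.sq_sqrt hD.le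
  have hsv : s = σ * sθ / sD := by
    rw [hs_def, hv_def, ← hsθ2, ← hsD2,
      show σ^2*sθ^2/sD^2 = (σ*sθ/sD)^2 by ring]
    exact Real.sqrt_sq (by positivity)
  have hθ32 : θ^((3:ℝ)/2) = sθ^3 := by
    rw [hsθ_def, Real.sqrt_eq_rpow, ← Real.rpow_natCast (θ^((1:ℝ)/2)) 3,
      ← Real.rpow_mul hθ.le]
    norm_num
  have hD45 : D^((4.5:ℝ)) = D^4 * sD := by
    rw [hsD_def, Real.sqrt_eq_rpow, show (4.5:ℝ) = (4:ℕ) + (1:ℝ)/2 by norm_num,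
      Real.rpow_add hD, Real.rpow_natCast]
  have hterm2 : 8*(r^3/s)*v^2 = 8*σ^3*θ^((3:ℝ)/2)*x^3/D^((4.5:ℝ)) := by
    rw [hθ32, hD45, hsv, hr_def, hv_def, ← hsθ2, ← hsD2]
    exact term2_aux σ sθ sD x hσ.ne' hsθ.ne' hsD.ne'
  have hsq : (2:ℝ)/3 ≤ Real.sqrt (2/π) := by
    rw [show (2:ℝ)/3 = Real.sqrt ((2/3)^2) from (Real.sqrt_sq (by norm_num)).symm]
    refine Real.sqrt_le_sqrt ?_
    rw [le_div_iff₀ hπ]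
    nlinarith [Real.pi_le_four]
  -- rnDeriv identification
  have hmeas_h : Measurable (fun y => gaussianPDF x (σ^2).toNNReal y / gaussianPDF 0 θ.toNNReal y) :=
    (measurable_gaussianPDF _ _).div (measurable_gaussianPDF _ _)
  have hWQ : W = Q.withDensity (fun y => gaussianPDF x (σ^2).toNNReal y / gaussianPDF 0 θ.toNNReal y) := by
    rw [hW_def, hQ_def, gaussianReal_of_var_ne_zero x hvσ, gaussianReal_of_var_ne_zero 0 hvθ,
      ← withDensity_mul _ (measurable_gaussianPDF _ _) hmeas_h]
    congr 1
    funext y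
    have h0 : gaussianPDF 0 θ.toNNReal y ≠ 0 := (gaussianPDF_pos _ hvθ _).ne'
    have ht : gaussianPDF 0 θ.toNNReal y ≠ ⊤ := ENNReal.ofReal_ne_top
    simp only [Pi.mul_apply]
    rw [mul_comm, ENNReal.div_mul_cancel h0 ht]
  have hrnQ : W.rnDeriv Q =ᵐ[Q]
      (fun y => gaussianPDF x (σ^2).toNNReal y / gaussianPDF 0 θ.toNNReal y) := by
    rw [hWQ, hQ_def]
    exact Measure.rnDeriv_withDensity _ hmeas_h
  have hVQ : V ≪ Q := by
    rw [hV_def, hQ_def]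
    exact (gaussianReal_absolutelyContinuous _ hvv).trans
      (gaussianReal_absolutelyContinuous' _ hvθ)
  have hlog : (fun y => Real.log ((W.rnDeriv Q y).toReal)) =ᵐ[V]
      (fun y => a*y^2 + tc*y + c') := by
    filter_upwards [hrnQ.filter_mono hVQ.ae_le] with y hy
    rw [hy]
    have hq : 0 < gaussianPDFReal 0 θ.toNNReal y := gaussianPDFReal_pos _ _ _ hvθ
    have hp : 0 < gaussianPDFReal x (σ^2).toNNReal y := gaussianPDFReal_pos _ _ _ hvσ
    show Real.log ((gaussianPDF x (σ^2).toNNReal y / gaussianPDF 0 θ.toNNReal y).toReal) = _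
    rw [gaussianPDF, gaussianPDF, ← ENNReal.ofReal_div_of_pos hq,
      ENNReal.toReal_ofReal (by positivity), Real.log_div hp.ne' hq.ne']
    rw [gaussianPDFReal, gaussianPDFReal]
    rw [Real.log_mul (by positivity) (Real.exp_ne_zero _), Real.log_exp,
      Real.log_mul (by positivity) (Real.exp_ne_zero _), Real.log_exp]
    rw [hcσ, hcθ]
    rw [ha_def, htc_def, hc'_def]
    field_simp
    ring
  have hc0 : (∫ z, Real.log ((W.rnDeriv Q z).toReal) ∂V) = a*(v+m^2) + tc*m + c' := by
    rw [integral_congr_ae hlog, hV_def]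
    exact integral_quad_gaussianReal hv a tc c'
  have hbound : (fun y => |Real.log ((W.rnDeriv Q y).toReal)
      - ∫ z, Real.log ((W.rnDeriv Q z).toReal) ∂V|^3) ≤ᵐ[V]
      (fun y => A*(y-m)^6 + B*(y-m)^4 + C*(y-m)^2 + E) := by
    filter_upwards [hlog] with y hy
    rw [hy, hc0]
    have heq : a*y^2 + tc*y + c' - (a*(v+m^2) + tc*m + c')
        = a*((y-m)^2 - v) + r*(y-m) := by
      rw [← hrid]; ring
    rw [heq]
    have h1 : |a*((y-m)^2 - v) + r*(y-m)|^3
        ≤ 4*|a*((y-m)^2-v)|^3 + 4*|r*(y-m)|^3 := cube_abs_add _ _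
    have h2 : |a*((y-m)^2-v)|^3 ≤ |a|^3 * ((y-m)^2+v)^3 := by
      rw [abs_mul, mul_pow]
      refine mul_le_mul_of_nonneg_left ?_ (by positivity)
      exact pow_le_pow_left₀ (abs_nonneg _) (abs_sq_sub_le (y-m) v hv.le) 3
    have h3 : |r*(y-m)|^3 ≤ r^3 * (((y-m)^4 + v*(y-m)^2)/(2*s)) := by
      rw [abs_mul, abs_of_pos hr0, mul_pow, hs_def]
      exact mul_le_mul_of_nonneg_left (abs_cube_le _ hv) (by positivity)
    have h4 : 4*(|a|^3 * ((y-m)^2+v)^3) + 4*(r^3 * (((y-m)^4 + v*(y-m)^2)/(2*s)))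
        = A*(y-m)^6 + B*(y-m)^4 + C*(y-m)^2 + E := by
      rw [hA_def, hB_def, hC_def, hE_def]; ring
    calc |a*((y-m)^2 - v) + r*(y-m)|^3
        ≤ 4*|a*((y-m)^2-v)|^3 + 4*|r*(y-m)|^3 := h1
      _ ≤ 4*(|a|^3*((y-m)^2+v)^3) + 4*(r^3*(((y-m)^4 + v*(y-m)^2)/(2*s))) :=
          add_le_add (mul_le_mul_of_nonneg_left h2 (by norm_num))
            (mul_le_mul_of_nonneg_left h3 (by norm_num))
      _ = A*(y-m)^6 + B*(y-m)^4 + C*(y-m)^2 + E := h4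
  have hgint : Integrable (fun y => A*(y-m)^6 + B*(y-m)^4 + C*(y-m)^2 + E) V := by
    rw [hV_def, gaussianReal_of_var_ne_zero _ hvv,
      integrable_withDensity_iff (measurable_gaussianPDF _ _)
        (Filter.Eventually.of_forall fun y => ENNReal.ofReal_lt_top)]
    have hrw : (fun y => (A*(y-m)^6 + B*(y-m)^4 + C*(y-m)^2 + E)
        * (gaussianPDF m v.toNNReal y).toReal)
        = fun y => (fun t => (A*(Real.sqrt (2*π*v))⁻¹)*(t^6*Real.exp (-(2*v)⁻¹*t^2))
          + ((B*(Real.sqrt (2*π*v))⁻¹)*(t^4*Real.exp (-(2*v)⁻¹*t^2))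
          + ((C*(Real.sqrt (2*π*v))⁻¹)*(t^2*Real.exp (-(2*v)⁻¹*t^2))
          + (E*(Real.sqrt (2*π*v))⁻¹)*(t^0*Real.exp (-(2*v)⁻¹*t^2))))) (y - m) := by
      funext y
      rw [gaussianPDF, ENNReal.toReal_ofReal (gaussianPDFReal_nonneg _ _ _), gaussianPDFReal]
      rw [Real.coe_toNNReal _ hv.le]
      rw [show -(y-m)^2/(2*v) = -(2*v)⁻¹*(y-m)^2 by ring]
      ring
    rw [hrw]
    have hb : 0 < (2*v)⁻¹ := by positivity
    exact (( ((integrable_pow_gauss hb 6).const_mul _).add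
      (((integrable_pow_gauss hb 4).const_mul _).add
        (((integrable_pow_gauss hb 2).const_mul _).add
          ((integrable_pow_gauss hb 0).const_mul _)))).comp_sub_right m)
  have hmono : ∫ y, |Real.log ((W.rnDeriv Q y).toReal)
      - ∫ z, Real.log ((W.rnDeriv Q z).toReal) ∂V|^3 ∂V
      ≤ ∫ y, (A*(y-m)^6 + B*(y-m)^4 + C*(y-m)^2 + E) ∂V :=
    integral_mono_of_nonneg (Filter.Eventually.of_forall fun y => by positivity) hgint hbound
  have hval : ∫ y, (A*(y-m)^6 + B*(y-m)^4 + C*(y-m)^2 + E) ∂V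
      = 112*|a|^3*v^3 + 8*(r^3/s)*v^2 := by
    rw [hV_def, integral_sext_gaussianReal hv]
    rw [hA_def, hB_def, hC_def, hE_def]; ring
  refine le_trans hmono (le_trans (le_of_eq hval) ?_)
  rw [hterm1, hterm2]
  have hT3 : (0:ℝ) ≤ (θ-σ^2)^3 := pow_nonneg (by linarith) 3
  have hTT : (0:ℝ) ≤ σ^3*θ^((3:ℝ)/2)*x^3 := by positivity
  have hD45pos : (0:ℝ) < D^((4.5:ℝ)) := Real.rpow_pos_of_pos hD _
  have h8 : (8:ℝ) ≤ 18*Real.sqrt (2/π) := by linarith [hsq]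
  refine add_le_add ?_ ?_
  · exact (div_le_div_iff_of_pos_right (by positivity)).mpr
      (mul_le_mul_of_nonneg_right (by norm_num : (14:ℝ) ≤ 18) hT3)
  · rw [show 18 * Real.sqrt (2/π) * σ^3 * θ^((3:ℝ)/2) * x^3
        = (18*Real.sqrt (2/π)) * (σ^3*θ^((3:ℝ)/2)*x^3) by ring,
      show (8:ℝ)*σ^3*θ^((3:ℝ)/2)*x^3 = 8 * (σ^3*θ^((3:ℝ)/2)*x^3) by ring]
    exact (div_le_div_iff_of_pos_right hD45pos).mpr (mul_le_mul_of_nonneg_right h8 hTT)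

/-- Third absolute moment bound for the centered log-likelihood ratio of the Gaussian channel
under the order-`ρ` tilted measure:
`E_{V(x)}[|Λ_x|³] ≤ 18(θ_ρ−σ²)³/(ρθ_ρ+(1−ρ)σ²)³ + 18√(2/π) σ³ θ_ρ^{3/2} x³/(ρθ_ρ+(1−ρ)σ²)^{4.5}`. -/
theorem gaussian_tilted_third_moment (σ P ρ x θ : ℝ) (hσ : 0 < σ) (hP : 0 < P) (hx : 0 < x)
    (hρ : ρ ∈ Set.Ioo (0 : ℝ) 1)
    (hθ : θ = σ ^ 2 + P / 2 - σ ^ 2 / (2 * ρ) +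
      Real.sqrt ((P / 2 - σ ^ 2 / (2 * ρ)) ^ 2 + P * σ ^ 2)) :
    let W := gaussianReal x (σ ^ 2).toNNReal
    let Q := gaussianReal 0 θ.toNNReal
    let V := gaussianReal (ρ * θ * x / (ρ * θ + (1 - ρ) * σ ^ 2))
      (σ ^ 2 * θ / (ρ * θ + (1 - ρ) * σ ^ 2)).toNNReal
    let Λ := fun y : ℝ => Real.log ((W.rnDeriv Q y).toReal) -
      ∫ z, Real.log ((W.rnDeriv Q z).toReal) ∂V
    ∫ y, |Λ y| ^ 3 ∂V ≤
      18 * (θ - σ ^ 2) ^ 3 / (ρ * θ + (1 - ρ) * σ ^ 2) ^ 3 +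
        18 * Real.sqrt (2 / π) * σ ^ 3 * θ ^ ((3 : ℝ) / 2) * x ^ 3 /
          (ρ * θ + (1 - ρ) * σ ^ 2) ^ ((4.5 : ℝ)) := by
  have hθσ : σ ^ 2 ≤ θ := by
    have h1 : |P/2 - σ^2/(2*ρ)| ≤ Real.sqrt ((P/2 - σ^2/(2*ρ))^2 + P*σ^2) := by
      rw [← Real.sqrt_sq_eq_abs]
      exact Real.sqrt_le_sqrt (le_add_of_nonneg_right (by positivity))
    rw [hθ]
    have h2 := neg_abs_le (P/2 - σ^2/(2*ρ))
    linarith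
  intro W Q V Λ
  exact main_aux σ ρ x θ hσ hx hρ.1 hρ.2 hθσ
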